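/- Let q, r : ℝ → ℝ be twice differentiable functions satisfying the stationary AKNS equations -(1/2)q''(x) + q(x)²r(x) = 0 and (1/2)r''(x) - q(x)r(x)² = 0 for all x. Then the functions h₀(x) = (1/4)q'(x)r'(x) - (1/4)q(x)²r(x)² and h₁(x) = (1/2)r(x)q'(x) - (1/2)q(x)r'(x) are constant in x. -/

import Mathlib

/-- For solutions of the stationary AKNS equations `-(1/2)q'' + q²r = 0`,
`(1/2)r'' - qr² = 0`, the quantities `h₀ = (1/4)q'r' - (1/4)q²r²` and
`h₁ = (1/2)rq' - (1/2)qr'` are constants of motion. -/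
theorem stationary_n2_integrals (q r : ℝ → ℝ)
    (hq : Differentiable ℝ q) (hq' : Differentiable ℝ (deriv q))
    (hr : Differentiable ℝ r) (hr' : Differentiable ℝ (deriv r))
    (heq1 : ∀ x, -(1 / 2) * deriv (deriv q) x + (q x) ^ 2 * r x = 0)
    (heq2 : ∀ x, 1 / 2 * deriv (deriv r) x - q x * (r x) ^ 2 = 0) :
    (∀ x y : ℝ,
        1 / 4 * deriv q x * deriv r x - 1 / 4 * (q x) ^ 2 * (r x) ^ 2
          = 1 / 4 * deriv q y * deriv r y - 1 / 4 * (q y) ^ 2 * (r y) ^ 2)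
      ∧ (∀ x y : ℝ,
        1 / 2 * r x * deriv q x - 1 / 2 * q x * deriv r x
          = 1 / 2 * r y * deriv q y - 1 / 2 * q y * deriv r y) := by
  have hq2 : ∀ x, deriv (deriv q) x = 2 * (q x) ^ 2 * r x := by
    intro x; have := heq1 x; linarith
  have hr2 : ∀ x, deriv (deriv r) x = 2 * q x * (r x) ^ 2 := by
    intro x; have := heq2 x; linarith
  have key : ∀ (f : ℝ → ℝ), (∀ x, HasDerivAt f 0 x) →
      ∀ x y : ℝ, f x = f y := by
    intro f hf x y
    have : ∀ z, f z = f 0 := fun z =>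
      is_const_of_deriv_eq_zero (fun w => (hf w).differentiableAt)
        (fun w => (hf w).deriv) z 0
    rw [this x, this y]
  constructor
  · apply key
    intro x
    have h1 : HasDerivAt (fun z => 1 / 4 * deriv q z * deriv r z
        - 1 / 4 * (q z) ^ 2 * (r z) ^ 2)
        (1 / 4 * ((deriv (deriv q) x) * deriv r x + deriv q x * deriv (deriv r) x)
          - 1 / 4 * ((2 * q x * deriv q x) * (r x) ^ 2
            + (q x) ^ 2 * (2 * r x * deriv r x))) x := by
      have hA : HasDerivAt (fun z => deriv q z * deriv r z)
          (deriv (deriv q) x * deriv r x + deriv q x * deriv (deriv r) x) x :=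
        ((hq' x).hasDerivAt).mul ((hr' x).hasDerivAt)
      have hB : HasDerivAt (fun z => (q z) ^ 2 * (r z) ^ 2)
          ((2 * q x * deriv q x) * (r x) ^ 2 + (q x) ^ 2 * (2 * r x * deriv r x)) x := by
        have hq2' : HasDerivAt (fun z => (q z) ^ 2) (2 * q x * deriv q x) x := by
          have := ((hq x).hasDerivAt).pow 2
          simp [pow_one, mul_comm, mul_assoc, mul_left_comm] at this ⊢; exact this
        have hr2' : HasDerivAt (fun z => (r z) ^ 2) (2 * r x * deriv r x) x := by
          have := ((hr x).hasDerivAt).pow 2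
          simp [pow_one, mul_comm, mul_assoc, mul_left_comm] at this ⊢; exact this
        exact hq2'.mul hr2'
      have hS := (hA.const_mul (1/4 : ℝ)).sub (hB.const_mul (1/4 : ℝ))
      simp [mul_assoc] at hS ⊢; exact hS
    convert h1 using 1
    rw [hq2, hr2]; ring
  · apply key
    intro x
    have h1 : HasDerivAt (fun z => 1 / 2 * r z * deriv q z - 1 / 2 * q z * deriv r z)
        (1 / 2 * (deriv r x * deriv q x + r x * deriv (deriv q) x)
          - 1 / 2 * (deriv q x * deriv r x + q x * deriv (deriv r) x)) x := by
      have hA : HasDerivAt (fun z => r z * deriv q z)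
          (deriv r x * deriv q x + r x * deriv (deriv q) x) x :=
        ((hr x).hasDerivAt).mul ((hq' x).hasDerivAt)
      have hB : HasDerivAt (fun z => q z * deriv r z)
          (deriv q x * deriv r x + q x * deriv (deriv r) x) x :=
        ((hq x).hasDerivAt).mul ((hr' x).hasDerivAt)
      have hS := (hA.const_mul (1/2 : ℝ)).sub (hB.const_mul (1/2 : ℝ))
      simp [mul_assoc] at hS ⊢; exact hS
    convert h1 using 1
    rw [hq2, hr2]; ring
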